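/- Consider unconstrained online gradient descent x_{t+1} = x_t - (1/L)∇f_t(x_t) where each f_t is m-strongly convex and L-smooth with unconstrained minimizer x*_t. Then the dynamic regret satisfies ∑_{t=1}^T (f_t(x_t) - f_t(x*_t)) ≤ (L/2) ∑_{t=1}^T ‖x_t - x*_t‖², and ‖x_{t+1} - x*_{t+1}‖ ≤ (1 - m/L)‖x_t - x*_t‖ + ‖x*_t - x*_{t+1}‖, hence ∑_{t=1}^T ‖x_t - x*_t‖ ≤ (L/m)(‖x_1 - x*_1‖ + ∑_{t=1}^T ‖x*_t - x*_{t+1}‖). -/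

import Mathlib

open RealInnerProductSpace Set

section Aux

variable {F : Type*} [NormedAddCommGroup F] [InnerProductSpace ℝ F] [CompleteSpace F]

private lemma aux_line_hasDerivAt {φ : F → ℝ} {g u v : F} {s : ℝ}
    (h : HasGradientAt φ g (u + s • v)) :
    HasDerivAt (fun r : ℝ => φ (u + r • v)) ⟪g, v⟫ s := by
  have hline : HasDerivAt (fun r : ℝ => u + r • v) v s := by
    simpa using ((hasDerivAt_id s).smul_const v).const_add u
  have := h.hasFDerivAt.comp_hasDerivAt s hline
  simp [InnerProductSpace.toDual_apply_apply] at this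
  exact this

private lemma aux_grad_convex_ineq {φ : F → ℝ} {gu u : F}
    (hconv : ConvexOn ℝ Set.univ φ) (hg : HasGradientAt φ gu u) (v : F) :
    φ u + ⟪gu, v - u⟫ ≤ φ v := by
  have hψ : ConvexOn ℝ Set.univ (fun r : ℝ => φ (u + r • (v - u))) := by
    have h1 := hconv.comp_affineMap (AffineMap.lineMap u v : ℝ →ᵃ[ℝ] F)
    have h2 : (φ ∘ (AffineMap.lineMap u v : ℝ →ᵃ[ℝ] F)) = fun r : ℝ => φ (u + r • (v - u)) := by
      funext r
      simp [AffineMap.lineMap_apply, add_comm]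
    rw [h2] at h1
    simpa using h1
  have hd : HasDerivAt (fun r : ℝ => φ (u + r • (v - u))) ⟪gu, v - u⟫ 0 := by
    apply aux_line_hasDerivAt
    simpa using hg
  have := hψ.le_slope_of_hasDerivAt (Set.mem_univ (0:ℝ)) (Set.mem_univ (1:ℝ)) one_pos hd
  rw [slope_def_field] at this
  simp at this
  linarith

private lemma aux_descent {φ : F → ℝ} {g : F → F} {L : ℝ}
    (hg : ∀ z, HasGradientAt φ (g z) z)
    (hsm : ∀ a b, ‖g a - g b‖ ≤ L * ‖a - b‖) (u v : F) :
    φ v ≤ φ u + ⟪g u, v - u⟫ + L / 2 * ‖v - u‖ ^ 2 := by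
  set w := v - u with hw
  set G : ℝ → ℝ := fun r => φ (u + r • w) - r * ⟪g u, w⟫ - L * ‖w‖ ^ 2 / 2 * r ^ 2 with hG
  have hGd : ∀ r : ℝ, HasDerivAt G
      (⟪g (u + r • w), w⟫ - ⟪g u, w⟫ - L * ‖w‖ ^ 2 / 2 * (2 * r)) r := by
    intro r
    have h1 : HasDerivAt (fun r : ℝ => φ (u + r • w)) ⟪g (u + r • w), w⟫ r :=
      aux_line_hasDerivAt (hg _)
    have h2 : HasDerivAt (fun r : ℝ => r * ⟪g u, w⟫) ⟪g u, w⟫ r := by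
      simpa using (hasDerivAt_id r).mul_const ⟪g u, w⟫
    have h3 : HasDerivAt (fun r : ℝ => L * ‖w‖ ^ 2 / 2 * r ^ 2)
        (L * ‖w‖ ^ 2 / 2 * (2 * r)) r := by
      have := (hasDerivAt_pow 2 r).const_mul (L * ‖w‖ ^ 2 / 2)
      simpa [pow_one] using this
    exact (h1.sub h2).sub h3
  have hanti : AntitoneOn G (Set.Icc (0:ℝ) 1) := by
    have hc : Continuous G :=
      continuous_iff_continuousAt.2 fun r => (hGd r).differentiableAt.continuousAt
    apply antitoneOn_of_deriv_nonpos (convex_Icc 0 1) hc.continuousOn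
    · intro r _
      exact (hGd r).differentiableAt.differentiableWithinAt
    · intro r hr
      rw [interior_Icc] at hr
      rw [(hGd r).deriv]
      have hrpos : (0:ℝ) ≤ r := le_of_lt hr.1
      have hb : ⟪g (u + r • w) - g u, w⟫ ≤ L * r * ‖w‖ ^ 2 := by
        calc ⟪g (u + r • w) - g u, w⟫ ≤ ‖g (u + r • w) - g u‖ * ‖w‖ := real_inner_le_norm _ _
          _ ≤ (L * ‖(u + r • w) - u‖) * ‖w‖ :=
              mul_le_mul_of_nonneg_right (hsm _ _) (norm_nonneg _)
          _ = L * r * ‖w‖ ^ 2 := by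
              simp [norm_smul, abs_of_nonneg hrpos]; ring
      rw [inner_sub_left] at hb
      linarith
  have h01 : G 1 ≤ G 0 := hanti (Set.mem_Icc.2 ⟨le_refl 0, zero_le_one⟩)
    (Set.mem_Icc.2 ⟨zero_le_one, le_refl 1⟩) zero_le_one
  have e0 : G 0 = φ u := by simp [hG]
  have e1 : G 1 = φ v - ⟪g u, w⟫ - L * ‖w‖ ^ 2 / 2 := by
    rw [hG]; simp only [one_smul, one_pow, mul_one, one_mul]
    rw [show u + w = v by rw [hw]; abel]
  rw [e0, e1] at h01
  have : L * ‖w‖ ^ 2 / 2 = L / 2 * ‖v - u‖ ^ 2 := by rw [hw]; ring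
  linarith [this ▸ h01]

private lemma aux_bh {h : F → ℝ} {gh : F → F} {β : ℝ} (hβ : 0 ≤ β)
    (hconv : ConvexOn ℝ Set.univ h) (hg : ∀ z, HasGradientAt h (gh z) z)
    (hdesc : ∀ a b, h b ≤ h a + ⟪gh a, b - a⟫ + β / 2 * ‖b - a‖ ^ 2) (u v : F) :
    ‖gh u - gh v‖ ^ 2 ≤ β * ⟪gh u - gh v, u - v⟫ := by
  rcases eq_or_lt_of_le hβ with hβ0 | hβpos
  · have haff : ∀ a b : F, h b = h a + ⟪gh a, b - a⟫ := by
      intro a b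
      refine le_antisymm ?_ (aux_grad_convex_ineq hconv (hg a) b)
      have := hdesc a b
      rw [← hβ0] at this
      simpa using this
    have hkey : ∀ e : F, ⟪gh u - gh v, e⟫ = 0 := by
      intro e
      have h1 : h (u + e) = h u + ⟪gh u, e⟫ := by simpa using haff u (u + e)
      have h2 : h (u + e) = h v + ⟪gh v, u + e - v⟫ := haff v (u + e)
      have h3 : h u = h v + ⟪gh v, u - v⟫ := haff v u
      have h4 : ⟪gh v, u + e - v⟫ = ⟪gh v, u - v⟫ + ⟪gh v, e⟫ := by
        rw [show u + e - v = (u - v) + e by abel, inner_add_right]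
      rw [inner_sub_left]
      linarith
    have := hkey (gh u - gh v)
    rw [real_inner_self_eq_norm_sq] at this
    rw [this, ← hβ0]
    simp
  · have key : ∀ a b : F, h a + ⟪gh a, b - a⟫ + 1 / (2 * β) * ‖gh b - gh a‖ ^ 2 ≤ h b := by
      intro a b
      set Δ := gh b - gh a with hΔ
      set w := b - β⁻¹ • Δ with hwdef
      have h1 := aux_grad_convex_ineq hconv (hg a) w
      have h2 := hdesc b w
      have e1 : w - b = -(β⁻¹ • Δ) := by rw [hwdef]; abel
      have e2 : ⟪gh b, w - b⟫ = -(β⁻¹ * ⟪gh b, Δ⟫) := by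
        rw [e1, inner_neg_right, real_inner_smul_right]
      have e3 : ‖w - b‖ ^ 2 = β⁻¹ ^ 2 * ‖Δ‖ ^ 2 := by
        rw [e1, norm_neg, norm_smul, mul_pow]
        congr 1
        rw [Real.norm_eq_abs, sq_abs]
      have e4 : ⟪gh a, w - a⟫ = ⟪gh a, b - a⟫ - β⁻¹ * ⟪gh a, Δ⟫ := by
        rw [show w - a = (b - a) - β⁻¹ • Δ by rw [hwdef]; abel, inner_sub_right,
          real_inner_smul_right]
      have e5 : ⟪gh b, Δ⟫ - ⟪gh a, Δ⟫ = ‖Δ‖ ^ 2 := by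
        rw [← inner_sub_left, ← hΔ, real_inner_self_eq_norm_sq]
      rw [e4] at h1
      rw [e2, e3] at h2
      have hβne : β ≠ 0 := ne_of_gt hβpos
      have : β / 2 * (β⁻¹ ^ 2 * ‖Δ‖ ^ 2) = 1 / (2 * β) * ‖Δ‖ ^ 2 := by
        field_simp
      rw [this] at h2
      have hsum : h a + ⟪gh a, b - a⟫ - β⁻¹ * ⟪gh a, Δ⟫ ≤
          h b - β⁻¹ * ⟪gh b, Δ⟫ + 1 / (2 * β) * ‖Δ‖ ^ 2 := by linarith
      have e6 : β⁻¹ * ⟪gh b, Δ⟫ - β⁻¹ * ⟪gh a, Δ⟫ = β⁻¹ * ‖Δ‖ ^ 2 := by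
        rw [← mul_sub, e5]
      have e7 : β⁻¹ * ‖Δ‖ ^ 2 - 1 / (2 * β) * ‖Δ‖ ^ 2 = 1 / (2 * β) * ‖Δ‖ ^ 2 := by
        field_simp; ring
      linarith
    have k1 := key u v
    have k2 := key v u
    have hn : ‖gh v - gh u‖ = ‖gh u - gh v‖ := norm_sub_rev _ _
    rw [hn] at k1
    have hinner : ⟪gh u, v - u⟫ + ⟪gh v, u - v⟫ = -⟪gh u - gh v, u - v⟫ := by
      simp only [inner_sub_left, inner_sub_right]
      ring
    have hsum2 : 1 / β * ‖gh u - gh v‖ ^ 2 ≤ ⟪gh u - gh v, u - v⟫ := by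
      have e8 : 1 / β * ‖gh u - gh v‖ ^ 2
          = 1 / (2 * β) * ‖gh u - gh v‖ ^ 2 + 1 / (2 * β) * ‖gh u - gh v‖ ^ 2 := by
        field_simp; ring
      linarith [k1, k2, hinner]
    have := mul_le_mul_of_nonneg_left hsum2 (le_of_lt hβpos)
    rw [show β * (1 / β * ‖gh u - gh v‖ ^ 2) = ‖gh u - gh v‖ ^ 2 by
      field_simp] at this
    exact this

end Aux

/-- Unconstrained online gradient descent with stepsize `1/L`:
regret bounded by `(L/2)∑‖x_t - x*_t‖²`, per-step contraction
`‖x_{t+1} - x*_{t+1}‖ ≤ (1 - m/L)‖x_t - x*_t‖ + ‖x*_t - x*_{t+1}‖`, and the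
cumulative tracking bound `∑‖x_t - x*_t‖ ≤ (L/m)(‖x_1 - x*_1‖ + ∑‖x*_t - x*_{t+1}‖)`. -/
theorem stmt_14 {d : ℕ} (f : ℕ → EuclideanSpace ℝ (Fin d) → ℝ)
    (f' : ℕ → EuclideanSpace ℝ (Fin d) → EuclideanSpace ℝ (Fin d))
    (m L : ℝ) (hm : 0 < m) (hmL : m ≤ L)
    (hgrad : ∀ t y, HasGradientAt (f t) (f' t y) y)
    (hsc : ∀ t, ConvexOn ℝ Set.univ (fun y => f t y - m / 2 * ‖y‖ ^ 2))
    (hsmooth : ∀ t x y, ‖f' t x - f' t y‖ ≤ L * ‖x - y‖)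
    (x xs : ℕ → EuclideanSpace ℝ (Fin d))
    (hxs_min : ∀ t y, f t (xs t) ≤ f t y)
    (hstep : ∀ t, x (t + 1) = x t - (1 / L) • f' t (x t)) (T : ℕ) :
    (∑ t ∈ Finset.Icc 1 T, (f t (x t) - f t (xs t))
        ≤ L / 2 * ∑ t ∈ Finset.Icc 1 T, ‖x t - xs t‖ ^ 2) ∧
    (∀ t, ‖x (t + 1) - xs (t + 1)‖
        ≤ (1 - m / L) * ‖x t - xs t‖ + ‖xs t - xs (t + 1)‖) ∧
    (∑ t ∈ Finset.Icc 1 T, ‖x t - xs t‖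
        ≤ L / m * (‖x 1 - xs 1‖ + ∑ t ∈ Finset.Icc 1 T, ‖xs t - xs (t + 1)‖)) := by
  have hL : (0:ℝ) < L := lt_of_lt_of_le hm hmL
  have hLne : L ≠ 0 := ne_of_gt hL
  -- gradient vanishes at the minimizers
  have hgzero : ∀ t, f' t (xs t) = 0 := by
    intro t
    have hminOn : IsMinOn (f t) Set.univ (xs t) := isMinOn_iff.2 fun y _ => hxs_min t y
    have hmin : IsLocalMin (f t) (xs t) := hminOn.isLocalMin Filter.univ_mem
    have h0 := hmin.hasFDerivAt_eq_zero (hgrad t (xs t)).hasFDerivAt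
    apply (InnerProductSpace.toDual ℝ (EuclideanSpace ℝ (Fin d))).injective
    rw [h0]; simp
  -- the descent lemma for each `f t`
  have hdesc : ∀ t a b, f t b ≤ f t a + ⟪f' t a, b - a⟫ + L / 2 * ‖b - a‖ ^ 2 :=
    fun t => aux_descent (hgrad t) (hsmooth t)
  -- pointwise regret bound
  have part1 : ∀ t, f t (x t) - f t (xs t) ≤ L / 2 * ‖x t - xs t‖ ^ 2 := by
    intro t
    have := hdesc t (xs t) (x t)
    rw [hgzero t] at this
    simp only [inner_zero_left] at this
    linarith
  -- the gradient of `h t = f t - m/2 ‖·‖²`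
  have hq : ∀ z : EuclideanSpace ℝ (Fin d), HasFDerivAt (fun y => m / 2 * ‖y‖ ^ 2)
      ((InnerProductSpace.toDual ℝ (EuclideanSpace ℝ (Fin d))) (m • z)) z := by
    intro z
    have h1 : HasFDerivAt (fun y : EuclideanSpace ℝ (Fin d) => ‖y‖ ^ 2)
        (2 • (innerSL ℝ z)) z := (hasStrictFDerivAt_norm_sq z).hasFDerivAt
    have h2 := h1.const_mul (m / 2)
    refine h2.congr_fderiv ?_
    ext w
    simp only [InnerProductSpace.toDual_apply_apply, ContinuousLinearMap.smul_apply,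
      ContinuousLinearMap.coe_smul', Pi.smul_apply, innerSL_apply_apply, smul_eq_mul,
      real_inner_smul_left]
    ring
  have hgh : ∀ t z, HasGradientAt (fun y => f t y - m / 2 * ‖y‖ ^ 2) (f' t z - m • z) z := by
    intro t z
    have h1 := (hgrad t z).hasFDerivAt.sub (hq z)
    rw [← map_sub] at h1
    simpa [Pi.sub_def] using h1.hasGradientAt
  -- descent lemma for `h t` with constant `L - m`
  have hdesch : ∀ t (a b : EuclideanSpace ℝ (Fin d)),
      (fun y => f t y - m / 2 * ‖y‖ ^ 2) b ≤ (fun y => f t y - m / 2 * ‖y‖ ^ 2) a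
        + ⟪f' t a - m • a, b - a⟫ + (L - m) / 2 * ‖b - a‖ ^ 2 := by
    intro t a b
    simp only
    have hd := hdesc t a b
    have e1 : ⟪f' t a - m • a, b - a⟫ = ⟪f' t a, b - a⟫ - m * ⟪a, b - a⟫ := by
      rw [inner_sub_left, real_inner_smul_left]
    have e3 : ⟪a, b - a⟫ = ⟪a, b⟫ - ‖a‖ ^ 2 := by
      rw [inner_sub_right, real_inner_self_eq_norm_sq]
    have idm : m / 2 * ‖b‖ ^ 2 - m / 2 * ‖a‖ ^ 2 - m * ⟪a, b - a⟫ - m / 2 * ‖b - a‖ ^ 2 = 0 := by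
      rw [e3, norm_sub_sq_real, real_inner_comm b a]
      ring
    rw [e1]
    linarith
  -- Baillon–Haddad for `h t`
  have hBH : ∀ t (u v : EuclideanSpace ℝ (Fin d)),
      ‖(f' t u - m • u) - (f' t v - m • v)‖ ^ 2
        ≤ (L - m) * ⟪(f' t u - m • u) - (f' t v - m • v), u - v⟫ :=
    fun t u v => aux_bh (sub_nonneg.2 hmL) (hsc t) (hgh t) (hdesch t) u v
  have h1ml : (0:ℝ) ≤ 1 - m / L := by
    rw [sub_nonneg]
    exact div_le_one_of_le₀ hmL hL.le
  -- per-step contraction towards the current minimizer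
  have hcontr : ∀ t, ‖x (t + 1) - xs t‖ ≤ (1 - m / L) * ‖x t - xs t‖ := by
    intro t
    set δ := x t - xs t with hδ
    set G := f' t (x t) with hG
    set Δh := G - m • δ with hΔh
    have hbh := hBH t (x t) (xs t)
    have hre : (f' t (x t) - m • x t) - (f' t (xs t) - m • xs t) = Δh := by
      rw [hgzero t, hΔh, hG, hδ, smul_sub]
      abel
    rw [hre, ← hδ] at hbh
    have hGd : G = m • δ + Δh := by rw [hΔh]; abel
    have hxe : x (t + 1) - xs t = δ - (1 / L) • G := by
      rw [hstep t, hδ, hG]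
      abel
    rw [hxe]
    have e1 : ‖δ - (1 / L) • G‖ ^ 2
        = ‖δ‖ ^ 2 - 2 * (1 / L * ⟪δ, G⟫) + (1 / L) ^ 2 * ‖G‖ ^ 2 := by
      rw [norm_sub_sq_real, real_inner_smul_right, norm_smul, Real.norm_eq_abs,
        abs_of_pos (by positivity : (0:ℝ) < 1 / L)]
      ring
    have e2 : ⟪δ, G⟫ = m * ‖δ‖ ^ 2 + ⟪δ, Δh⟫ := by
      rw [hGd, inner_add_right, real_inner_smul_right, real_inner_self_eq_norm_sq]
    have e3 : ‖G‖ ^ 2 = m ^ 2 * ‖δ‖ ^ 2 + 2 * m * ⟪δ, Δh⟫ + ‖Δh‖ ^ 2 := by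
      rw [hGd, norm_add_sq_real, norm_smul, real_inner_smul_left, Real.norm_eq_abs,
        abs_of_pos hm]
      ring
    have e5 : ⟪Δh, δ⟫ = ⟪δ, Δh⟫ := real_inner_comm _ _
    rw [e5] at hbh
    have hkey : (0:ℝ) ≤ 2 * (L - m) * ⟪δ, Δh⟫ - ‖Δh‖ ^ 2 := by
      have hC : (0:ℝ) ≤ ‖Δh‖ ^ 2 := sq_nonneg _
      linarith
    have hsq : ‖δ - (1 / L) • G‖ ^ 2 ≤ ((1 - m / L) * ‖δ‖) ^ 2 := by
      have hfinal : ((1 - m / L) * ‖δ‖) ^ 2 - ‖δ - (1 / L) • G‖ ^ 2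
          = (2 * (L - m) * ⟪δ, Δh⟫ - ‖Δh‖ ^ 2) / L ^ 2 := by
        rw [e1, e2, e3]
        field_simp
        ring
      have := div_nonneg hkey (sq_nonneg L)
      linarith
    exact le_of_pow_le_pow_left₀ two_ne_zero (mul_nonneg h1ml (norm_nonneg _)) hsq
  -- part 2
  have part2 : ∀ t, ‖x (t + 1) - xs (t + 1)‖
      ≤ (1 - m / L) * ‖x t - xs t‖ + ‖xs t - xs (t + 1)‖ := by
    intro t
    have h3 : x (t + 1) - xs (t + 1) = (x (t + 1) - xs t) + (xs t - xs (t + 1)) := by abel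
    calc ‖x (t + 1) - xs (t + 1)‖ = ‖(x (t + 1) - xs t) + (xs t - xs (t + 1))‖ := by rw [h3]
      _ ≤ ‖x (t + 1) - xs t‖ + ‖xs t - xs (t + 1)‖ := norm_add_le _ _
      _ ≤ (1 - m / L) * ‖x t - xs t‖ + ‖xs t - xs (t + 1)‖ := by linarith [hcontr t]
  refine ⟨?_, part2, ?_⟩
  · calc ∑ t ∈ Finset.Icc 1 T, (f t (x t) - f t (xs t))
        ≤ ∑ t ∈ Finset.Icc 1 T, L / 2 * ‖x t - xs t‖ ^ 2 :=
          Finset.sum_le_sum fun t _ => part1 t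
      _ = L / 2 * ∑ t ∈ Finset.Icc 1 T, ‖x t - xs t‖ ^ 2 := by rw [Finset.mul_sum]
  · -- part 3
    have key : ∀ N : ℕ, m / L * (∑ t ∈ Finset.Icc 1 N, ‖x t - xs t‖) + ‖x (N + 1) - xs (N + 1)‖
        ≤ ‖x 1 - xs 1‖ + ∑ t ∈ Finset.Icc 1 N, ‖xs t - xs (t + 1)‖ := by
      intro N
      induction N with
      | zero => simp
      | succ n ih =>
        rw [Finset.sum_Icc_succ_top (Nat.le_add_left 1 n), Finset.sum_Icc_succ_top
          (Nat.le_add_left 1 n)]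
        have hp := part2 (n + 1)
        have hexp : m / L * ((∑ t ∈ Finset.Icc 1 n, ‖x t - xs t‖) + ‖x (n + 1) - xs (n + 1)‖)
            = m / L * (∑ t ∈ Finset.Icc 1 n, ‖x t - xs t‖)
              + m / L * ‖x (n + 1) - xs (n + 1)‖ := by ring
        have hexp2 : (1 - m / L) * ‖x (n + 1) - xs (n + 1)‖
            = ‖x (n + 1) - xs (n + 1)‖ - m / L * ‖x (n + 1) - xs (n + 1)‖ := by ring
        rw [hexp]
        linarith
    have hkeyT := key T
    have hnn : (0:ℝ) ≤ ‖x (T + 1) - xs (T + 1)‖ := norm_nonneg _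
    have hml : m / L * (∑ t ∈ Finset.Icc 1 T, ‖x t - xs t‖)
        ≤ ‖x 1 - xs 1‖ + ∑ t ∈ Finset.Icc 1 T, ‖xs t - xs (t + 1)‖ := by linarith
    have hpos : (0:ℝ) < L / m := div_pos hL hm
    have := mul_le_mul_of_nonneg_left hml hpos.le
    rw [show L / m * (m / L * (∑ t ∈ Finset.Icc 1 T, ‖x t - xs t‖))
        = ∑ t ∈ Finset.Icc 1 T, ‖x t - xs t‖ by field_simp] at this
    exact this
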